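/- Let Ω = (0,1)² be the open unit square in ℝ² and let g be continuous on Ω̄ = [0,1]². If y is continuous on Ω̄, twice continuously differentiable in Ω, and satisfies −Δy = g in Ω and y = 0 on the boundary of the square, then max_{x∈Ω̄}|y(x)| ≤ (1/8)·max_{x∈Ω̄}|g(x)|. -/

import Mathlib

/-- The Laplace operator on `ℝ²` (realized as `ℝ × ℝ`):
`Δ f x = ∂²f/∂x₁² (x) + ∂²f/∂x₂² (x)`. -/
noncomputable def lap2 (f : ℝ × ℝ → ℝ) (x : ℝ × ℝ) : ℝ :=
  fderiv ℝ (fun p => fderiv ℝ f p ((1 : ℝ), (0 : ℝ))) x ((1 : ℝ), (0 : ℝ)) +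
  fderiv ℝ (fun p => fderiv ℝ f p ((0 : ℝ), (1 : ℝ))) x ((0 : ℝ), (1 : ℝ))

/-- `max_{x ∈ S} |y x|` (as a supremum). -/
noncomputable def supNorm {α : Type*} (S : Set α) (y : α → ℝ) : ℝ :=
  sSup ((fun x => |y x|) '' S)

/-- The open unit square `Ω = (0,1)²`. -/
def unitSq : Set (ℝ × ℝ) := Set.Ioo (0 : ℝ) 1 ×ˢ Set.Ioo (0 : ℝ) 1

/-- The closed unit square `Ω̄ = [0,1]²`. -/
def unitSqCl : Set (ℝ × ℝ) := Set.Icc (0 : ℝ) 1 ×ˢ Set.Icc (0 : ℝ) 1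

open Filter Topology Set

/-- 1D second-derivative test at a local max, via the mean value theorem. -/
lemma second_deriv_test {f g : ℝ → ℝ} {c : ℝ}
    (hf : ∀ᶠ t in 𝓝 (0:ℝ), HasDerivAt f (g t) t)
    (hg : HasDerivAt g c 0)
    (hmax : IsLocalMax f 0) : c ≤ 0 := by
  by_contra hc
  push_neg at hc
  have hf0 : HasDerivAt f (g 0) 0 := hf.self_of_nhds
  have hg0 : g 0 = 0 := by
    have h1 := hmax.deriv_eq_zero
    rwa [hf0.deriv] at h1
  have hslope : Tendsto (slope g 0) (𝓝[≠] (0:ℝ)) (𝓝 c) :=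
    hasDerivAt_iff_tendsto_slope.mp hg
  have hpos : ∀ᶠ t in 𝓝[>] (0:ℝ), 0 < g t := by
    have h1 : ∀ᶠ t in 𝓝[≠] (0:ℝ), 0 < slope g 0 t :=
      hslope.eventually (eventually_gt_nhds hc)
    have h2 : ∀ᶠ t in 𝓝[>] (0:ℝ), 0 < slope g 0 t :=
      h1.filter_mono (nhdsWithin_mono _ fun t ht => ne_of_gt ht)
    filter_upwards [h2, self_mem_nhdsWithin] with t hst ht
    have hts : slope g 0 t = g t / t := by simp [slope, hg0]; ring
    rw [hts] at hst
    have h3 := mul_pos hst (show (0:ℝ) < t from ht)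
    rwa [div_mul_cancel₀ _ (ne_of_gt (show (0:ℝ) < t from ht))] at h3
  have hev : ∀ᶠ t in 𝓝[>] (0:ℝ), 0 < g t ∧ HasDerivAt f (g t) t ∧ f t ≤ f 0 := by
    have hm : ∀ᶠ t in 𝓝 (0:ℝ), f t ≤ f 0 := hmax
    filter_upwards [hpos, (hf.and hm).filter_mono nhdsWithin_le_nhds] with t h1 h2
    exact ⟨h1, h2.1, h2.2⟩
  obtain ⟨δ, hδpos, hδ⟩ := mem_nhdsGT_iff_exists_Ioo_subset.mp hev
  rw [Set.mem_Ioi] at hδpos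
  set b : ℝ := δ / 2 with hb
  have hbδ : b ∈ Set.Ioo (0:ℝ) δ := ⟨by positivity, by simp [hb]; linarith⟩
  have hmono : StrictMonoOn f (Set.Icc 0 b) := by
    apply strictMonoOn_of_deriv_pos (convex_Icc 0 b)
    · intro t ht
      rcases eq_or_lt_of_le ht.1 with h | h
      · exact (h ▸ hf0.differentiableAt).continuousAt.continuousWithinAt
      · exact ((hδ ⟨h, lt_of_le_of_lt ht.2 hbδ.2⟩).2.1.differentiableAt).continuousAt.continuousWithinAt
    · intro t ht
      rw [interior_Icc] at ht
      have h1 := hδ ⟨ht.1, lt_trans ht.2 hbδ.2⟩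
      rw [h1.2.1.deriv]
      exact h1.1
  have h4 : f 0 < f b := hmono ⟨le_refl 0, le_of_lt hbδ.1⟩ ⟨le_of_lt hbδ.1, le_refl b⟩ hbδ.1
  exact absurd (hδ hbδ).2.2 (not_le.mpr h4)


lemma isOpen_unitSq : IsOpen unitSq := (isOpen_Ioo).prod (isOpen_Ioo)

lemma dir_second_le (u : ℝ × ℝ → ℝ) (hu2 : ContDiffOn ℝ 2 u unitSq)
    {x₀ : ℝ × ℝ} (hx : x₀ ∈ unitSq) (hmax : IsLocalMax u x₀) (e : ℝ × ℝ) :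
    fderiv ℝ (fun p => fderiv ℝ u p e) x₀ e ≤ 0 := by
  set L : ℝ → ℝ × ℝ := fun t => x₀ + t • e with hLdef
  have hLc : Continuous L := continuous_const.add (continuous_id.smul continuous_const)
  have hL : ∀ t : ℝ, HasDerivAt L e t := by
    intro t
    have h := ((hasDerivAt_id t).smul_const e).const_add x₀
    simpa [hLdef] using h
  have h00 : L 0 = x₀ := by simp [hLdef]
  have hnhds : {t : ℝ | L t ∈ unitSq} ∈ 𝓝 (0:ℝ) := by
    have : IsOpen {t : ℝ | L t ∈ unitSq} := isOpen_unitSq.preimage hLc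
    exact this.mem_nhds (by simpa [h00] using hx)
  set φ : ℝ × ℝ → ℝ := fun p => fderiv ℝ u p e with hφdef
  have hf : ∀ᶠ t in 𝓝 (0:ℝ), HasDerivAt (u ∘ L) (φ (L t)) t := by
    filter_upwards [hnhds] with t ht
    have hd : DifferentiableAt ℝ u (L t) :=
      (hu2.contDiffAt (isOpen_unitSq.mem_nhds ht)).differentiableAt two_ne_zero
    exact hd.hasFDerivAt.comp_hasDerivAt t (hL t)
  have h1 : ContDiffAt ℝ 1 (fderiv ℝ u) x₀ :=
    (hu2.contDiffAt (isOpen_unitSq.mem_nhds hx)).fderiv_right (by norm_num)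
  have hφd : DifferentiableAt ℝ φ x₀ := by
    have h2 : DifferentiableAt ℝ (fun p => (ContinuousLinearMap.apply ℝ ℝ e) (fderiv ℝ u p)) x₀ :=
      ((ContinuousLinearMap.apply ℝ ℝ e).differentiable.differentiableAt).comp x₀
        (h1.differentiableAt one_ne_zero)
    simpa [hφdef] using h2
  have hg : HasDerivAt (φ ∘ L) (fderiv ℝ φ x₀ e) 0 := by
    have h4 : HasFDerivAt φ (fderiv ℝ φ x₀) (L 0) := h00 ▸ hφd.hasFDerivAt
    exact h4.comp_hasDerivAt 0 (hL 0)
  have hmax' : IsLocalMax (u ∘ L) 0 := by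
    have ht : Tendsto L (𝓝 0) (𝓝 x₀) := by
      have := hLc.tendsto 0
      rwa [h00] at this
    have := ht.eventually hmax
    simpa [IsLocalMax, IsMaxFilter, h00] using this
  exact second_deriv_test hf hg hmax'



lemma sq_subset : unitSq ⊆ unitSqCl :=
  Set.prod_mono Set.Ioo_subset_Icc_self Set.Ioo_subset_Icc_self

lemma closure_unitSq : closure unitSq = unitSqCl := by
  rw [unitSq, unitSqCl, closure_prod_eq, closure_Ioo (by norm_num : (0:ℝ) ≠ 1)]

lemma frontier_unitSq : frontier unitSq = unitSqCl \ unitSq := by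
  rw [frontier, closure_unitSq, isOpen_unitSq.interior_eq]

lemma isCompact_unitSqCl : IsCompact unitSqCl := isCompact_Icc.prod isCompact_Icc

lemma lap2_nonpos_at_max (u : ℝ × ℝ → ℝ) (hu2 : ContDiffOn ℝ 2 u unitSq)
    {x₀ : ℝ × ℝ} (hx : x₀ ∈ unitSq) (hmax : IsLocalMax u x₀) : lap2 u x₀ ≤ 0 :=
  add_nonpos (dir_second_le u hu2 hx hmax _) (dir_second_le u hu2 hx hmax _)

lemma maxprin (u : ℝ × ℝ → ℝ) (B : ℝ) (huc : ContinuousOn u unitSqCl)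
    (hu2 : ContDiffOn ℝ 2 u unitSq)
    (hpos : ∀ x ∈ unitSq, 0 < lap2 u x)
    (hb : ∀ x ∈ frontier unitSq, u x ≤ B) :
    ∀ x ∈ unitSqCl, u x ≤ B := by
  obtain ⟨x₀, hx₀, hmax⟩ := isCompact_unitSqCl.exists_isMaxOn
    ⟨((0:ℝ),(0:ℝ)), by simp [unitSqCl]⟩ huc
  intro x hxm
  have hle : u x ≤ u x₀ := hmax hxm
  by_cases hin : x₀ ∈ unitSq
  · exfalso
    have hloc : IsLocalMax u x₀ := by
      have hnh : unitSqCl ∈ 𝓝 x₀ :=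
        Filter.mem_of_superset (isOpen_unitSq.mem_nhds hin) sq_subset
      exact Filter.eventually_of_mem hnh fun p hp => hmax hp
    exact absurd (lap2_nonpos_at_max u hu2 hin hloc) (not_le.mpr (hpos x₀ hin))
  · have hfr : x₀ ∈ frontier unitSq := by rw [frontier_unitSq]; exact ⟨hx₀, hin⟩
    exact le_trans hle (hb x₀ hfr)

noncomputable def qf : ℝ × ℝ → ℝ := fun p => (p.1 - 1/2)^2 + (p.2 - 1/2)^2

lemma qf_hasFDerivAt (p : ℝ × ℝ) :
    HasFDerivAt qf ((2*(p.1 - 1/2)) • ContinuousLinearMap.fst ℝ ℝ ℝ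
      + (2*(p.2 - 1/2)) • ContinuousLinearMap.snd ℝ ℝ ℝ) p := by
  have h1 : HasDerivAt (fun t : ℝ => (t - 1/2)^2) (2*(p.1 - 1/2)) p.1 := by
    have := ((hasDerivAt_id p.1).sub_const (1/2)).fun_pow 2
    simpa [mul_comm] using this
  have h2 : HasDerivAt (fun t : ℝ => (t - 1/2)^2) (2*(p.2 - 1/2)) p.2 := by
    have := ((hasDerivAt_id p.2).sub_const (1/2)).fun_pow 2
    simpa [mul_comm] using this
  exact (h1.comp_hasFDerivAt p hasFDerivAt_fst).add (h2.comp_hasFDerivAt p hasFDerivAt_snd)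

lemma qf_contDiff : ContDiff ℝ 2 qf := by
  apply ContDiff.add
  · exact (contDiff_fst.sub contDiff_const).pow 2
  · exact (contDiff_snd.sub contDiff_const).pow 2

lemma fderiv_qf_apply (p v : ℝ × ℝ) :
    fderiv ℝ qf p v = (2*(p.1 - 1/2))*v.1 + (2*(p.2 - 1/2))*v.2 := by
  rw [(qf_hasFDerivAt p).fderiv]
  simp

lemma fderiv_affine (b1 b2 k : ℝ) (x v : ℝ × ℝ) :
    fderiv ℝ (fun p : ℝ × ℝ => b1 * p.1 + b2 * p.2 + k) x v = b1 * v.1 + b2 * v.2 := by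
  have h : HasFDerivAt (fun p : ℝ × ℝ => b1 * p.1 + b2 * p.2 + k)
      (b1 • ContinuousLinearMap.fst ℝ ℝ ℝ + b2 • ContinuousLinearMap.snd ℝ ℝ ℝ) x :=
    ((hasFDerivAt_fst.const_mul b1).add (hasFDerivAt_snd.const_mul b2)).add_const k
  rw [h.fderiv]; simp

lemma combo_dir (y : ℝ × ℝ → ℝ) (hy2 : ContDiffOn ℝ 2 y unitSq) (c a : ℝ)
    {x : ℝ × ℝ} (hx : x ∈ unitSq) (v : ℝ × ℝ) :
    fderiv ℝ (fun p => fderiv ℝ (fun q => c * y q + a * qf q) p v) x v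
      = c * fderiv ℝ (fun p => fderiv ℝ y p v) x v + a * (2*v.1*v.1 + 2*v.2*v.2) := by
  have hev : (fun p => fderiv ℝ (fun q => c * y q + a * qf q) p v)
      =ᶠ[𝓝 x] (fun p => c * fderiv ℝ y p v
        + ((a*(2*v.1))*p.1 + (a*(2*v.2))*p.2 + (a*(-v.1 - v.2)))) := by
    apply Filter.eventually_of_mem (isOpen_unitSq.mem_nhds hx)
    intro p hp
    have hyd : DifferentiableAt ℝ y p :=
      (hy2.contDiffAt (isOpen_unitSq.mem_nhds hp)).differentiableAt two_ne_zero
    have hqd : DifferentiableAt ℝ qf p := (qf_hasFDerivAt p).differentiableAt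
    beta_reduce
    rw [fderiv_fun_add (hyd.const_mul c) (hqd.const_mul a), fderiv_const_mul hyd,
      fderiv_const_mul hqd]
    simp only [ContinuousLinearMap.add_apply, ContinuousLinearMap.smul_apply, smul_eq_mul]
    rw [fderiv_qf_apply]
    ring
  rw [hev.fderiv_eq]
  have hψd : DifferentiableAt ℝ (fun p => fderiv ℝ y p v) x := by
    have h1 : ContDiffAt ℝ 1 (fderiv ℝ y) x :=
      (hy2.contDiffAt (isOpen_unitSq.mem_nhds hx)).fderiv_right (by norm_num)
    have h2 : DifferentiableAt ℝ (fun p => (ContinuousLinearMap.apply ℝ ℝ v) (fderiv ℝ y p)) x :=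
      ((ContinuousLinearMap.apply ℝ ℝ v).differentiable.differentiableAt).comp x
        (h1.differentiableAt one_ne_zero)
    simpa using h2
  have hgd : DifferentiableAt ℝ
      (fun p : ℝ × ℝ => (a*(2*v.1))*p.1 + (a*(2*v.2))*p.2 + (a*(-v.1 - v.2))) x := by
    fun_prop
  rw [fderiv_fun_add (hψd.const_mul c) hgd, fderiv_const_mul hψd]
  simp only [ContinuousLinearMap.add_apply, ContinuousLinearMap.smul_apply, smul_eq_mul]
  rw [fderiv_affine]
  ring

lemma lap2_combo (y : ℝ × ℝ → ℝ) (hy2 : ContDiffOn ℝ 2 y unitSq) (c a : ℝ)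
    {x : ℝ × ℝ} (hx : x ∈ unitSq) :
    lap2 (fun q => c * y q + a * qf q) x = c * lap2 y x + 4 * a := by
  unfold lap2
  rw [combo_dir y hy2 c a hx ((1:ℝ),(0:ℝ)), combo_dir y hy2 c a hx ((0:ℝ),(1:ℝ))]
  norm_num
  ring


lemma qf_nonneg (p : ℝ × ℝ) : 0 ≤ qf p := add_nonneg (sq_nonneg _) (sq_nonneg _)

lemma qf_le_half {p : ℝ × ℝ} (hp : p ∈ unitSqCl) : qf p ≤ 1/2 := by
  obtain ⟨⟨h1, h2⟩, h3, h4⟩ := hp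
  unfold qf
  nlinarith [sq_nonneg (p.1 - 1/2), sq_nonneg (p.2 - 1/2)]

lemma one_sided (w : ℝ × ℝ → ℝ) (hwc : ContinuousOn w unitSqCl)
    (hw2 : ContDiffOn ℝ 2 w unitSq) (M : ℝ) (hM0 : 0 ≤ M)
    (hlap : ∀ x ∈ unitSq, -(lap2 w x) ≤ M)
    (hbv : ∀ x ∈ frontier unitSq, w x = 0) :
    ∀ x ∈ unitSqCl, w x ≤ M / 8 := by
  intro x hx
  apply le_of_forall_pos_le_add
  intro ε hε
  set a : ℝ := M/4 + ε with ha
  have ha0 : 0 ≤ a := by positivity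
  set u : ℝ × ℝ → ℝ := fun q => 1 * w q + a * qf q with hu
  have huc : ContinuousOn u unitSqCl :=
    (continuousOn_const.mul hwc).add
      (continuousOn_const.mul (qf_contDiff.continuous.continuousOn))
  have hu2 : ContDiffOn ℝ 2 u unitSq :=
    (contDiffOn_const.mul hw2).add (contDiffOn_const.mul qf_contDiff.contDiffOn)
  have hpos : ∀ z ∈ unitSq, 0 < lap2 u z := by
    intro z hz
    rw [hu, lap2_combo w hw2 1 a hz]
    have h5 := hlap z hz
    rw [ha]
    linarith
  have hbd : ∀ z ∈ frontier unitSq, u z ≤ a / 2 := by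
    intro z hz
    have hzc : z ∈ unitSqCl := by
      rw [frontier_unitSq] at hz; exact hz.1
    have h1 := qf_le_half hzc
    have h2 := hbv z hz
    simp only [hu, h2]
    nlinarith
  have := maxprin u (a/2) huc hu2 hpos hbd x hx
  have hq0 := qf_nonneg x
  simp only [hu] at this
  nlinarith

/-- Let `Ω = (0,1)²` be the open unit square and `g` continuous on
`Ω̄ = [0,1]²`.  If `y` is continuous on `Ω̄`, twice continuously differentiable in `Ω`,
satisfies `−Δy = g` in `Ω` and `y = 0` on the boundary of the square, then
`max_{x∈Ω̄} |y x| ≤ (1/8) · max_{x∈Ω̄} |g x|`. -/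
theorem statement1 (g y : ℝ × ℝ → ℝ)
    (hg : ContinuousOn g unitSqCl)
    (hyc : ContinuousOn y unitSqCl)
    (hy2 : ContDiffOn ℝ 2 y unitSq)
    (heq : ∀ x ∈ unitSq, -(lap2 y x) = g x)
    (hbv : ∀ x ∈ frontier unitSq, y x = 0) :
    supNorm unitSqCl y ≤ (1 / 8) * supNorm unitSqCl g := by
  set M : ℝ := supNorm unitSqCl g with hM
  have bdd : BddAbove ((fun x => |g x|) '' unitSqCl) :=
    (isCompact_unitSqCl.image_of_continuousOn hg.abs).bddAbove
  have habs : ∀ x ∈ unitSqCl, |g x| ≤ M := fun x hx => le_csSup bdd ⟨x, hx, rfl⟩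
  have hM0 : 0 ≤ M :=
    le_trans (abs_nonneg _) (habs ((0:ℝ),(0:ℝ)) (by simp [unitSqCl]))
  have hup : ∀ x ∈ unitSqCl, y x ≤ M / 8 := by
    apply one_sided y hyc hy2 M hM0 _ hbv
    intro x hx
    rw [heq x hx]
    exact le_trans (le_abs_self _) (habs x (sq_subset hx))
  have hdn : ∀ x ∈ unitSqCl, -(y x) ≤ M / 8 := by
    apply one_sided (fun q => -(y q)) hyc.neg hy2.neg M hM0 _
      (fun x hx => by simp [hbv x hx])
    intro x hx
    have hl : lap2 (fun q => -(y q)) x = -(lap2 y x) := by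
      have he : (fun q : ℝ × ℝ => -(y q)) = fun q => (-1 : ℝ) * y q + 0 * qf q := by
        funext q; ring
      rw [he, lap2_combo y hy2 (-1) 0 hx]
      ring
    rw [hl, neg_neg]
    have h2 := heq x hx
    linarith [h2, habs x (sq_subset hx), neg_abs_le (g x), le_abs_self (g x)]
  have hboth : ∀ x ∈ unitSqCl, |y x| ≤ M / 8 := fun x hx =>
    abs_le.mpr ⟨by linarith [hdn x hx], hup x hx⟩
  have : supNorm unitSqCl y ≤ M / 8 := by
    apply Real.sSup_le _ (by positivity)
    rintro z ⟨x, hx, rfl⟩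
    exact hboth x hx
  linarith
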